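/- Let E be a real inner product space, ρ > 0, and let f : E → ℝ be differentiable and ρ-smooth. Let f_* ∈ ℝ satisfy f_* ≤ f(x) for all x ∈ E. Let C ≥ 0, ε ≥ 0, let T be a positive integer, let γ satisfy 0 < γ ≤ 1/ρ, and let iterates W₁, W₂, …, W_{T+1} ∈ E and errors δ₁, …, δ_T ∈ E satisfy W_{t+1} = W_t − γ·(∇f(W_t) + δ_t), |⟪∇f(W_t), δ_t⟫| ≤ C·ε, and ‖δ_t‖² ≤ C for every 1 ≤ t ≤ T. Then (γ − (ρ/2)·γ²)·Σ_{t=1}^{T} ‖∇f(W_t)‖² ≤ f(W₁) − f_* + C·T·(γ − ρ·γ²)·ε + (ρ/2)·C·T·γ². -/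
import Mathlib


open scoped RealInnerProductSpace

/-- Summed descent inequality for `T` steps of gradient descent with
approximate gradients `g (W t) + δ t` on a ρ-smooth function `f` bounded below
by `f_*`: if `0 < γ ≤ 1/ρ`, `|⟪g (W t), δ t⟫| ≤ C ε` and `‖δ t‖² ≤ C` for all
`1 ≤ t ≤ T`, then
`(γ - (ρ/2) γ²) ∑_{t=1}^T ‖g (W t)‖² ≤ f (W 1) - f_* + C T (γ - ρ γ²) ε + (ρ/2) C T γ²`. -/
theorem smooth_descent_sum {E : Type*} [NormedAddCommGroup E]
    [InnerProductSpace ℝ E] {ρ : ℝ} (hρ : 0 < ρ) (f : E → ℝ) (g : E → E)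
    (hdiff : ∀ x : E, HasFDerivAt f (innerSL ℝ (g x)) x)
    (hsmooth : ∀ x y : E, |f y - f x - ⟪g x, y - x⟫| ≤ ρ / 2 * ‖y - x‖ ^ 2)
    (fstar : ℝ) (hfstar : ∀ x : E, fstar ≤ f x)
    {C ε : ℝ} (hC : 0 ≤ C) (hε : 0 ≤ ε)
    (T : ℕ) (hT : 0 < T) {γ : ℝ} (hγpos : 0 < γ) (hγle : γ ≤ 1 / ρ)
    (W : ℕ → E) (δ : ℕ → E)
    (hupd : ∀ t, 1 ≤ t → t ≤ T → W (t + 1) = W t - γ • (g (W t) + δ t))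
    (hip : ∀ t, 1 ≤ t → t ≤ T → |⟪g (W t), δ t⟫| ≤ C * ε)
    (hδ : ∀ t, 1 ≤ t → t ≤ T → ‖δ t‖ ^ 2 ≤ C) :
    (γ - ρ / 2 * γ ^ 2) * ∑ t ∈ Finset.Icc 1 T, ‖g (W t)‖ ^ 2 ≤
      f (W 1) - fstar + C * T * (γ - ρ * γ ^ 2) * ε + ρ / 2 * C * T * γ ^ 2 := by
  have hργ : ρ * γ ≤ 1 := by
    rw [le_div_iff₀ hρ] at hγle
    linarith
  -- per-step inequality
  have hstep : ∀ t, 1 ≤ t → t ≤ T →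
      (γ - ρ / 2 * γ ^ 2) * ‖g (W t)‖ ^ 2 ≤
        f (W t) - f (W (t + 1)) + C * ε * (γ - ρ * γ ^ 2) + ρ / 2 * C * γ ^ 2 := by
    intro t h1 h2
    set x := W t
    set y := W (t + 1)
    have hy : y - x = -(γ • (g x + δ t)) := by
      show W (t+1) - W t = _
      rw [hupd t h1 h2]; abel
    have hipv : ⟪g x, y - x⟫ = -(γ * (‖g x‖ ^ 2 + ⟪g x, δ t⟫)) := by
      rw [hy, inner_neg_right, real_inner_smul_right, inner_add_right,
        real_inner_self_eq_norm_sq]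
    have hnsq : ‖y - x‖ ^ 2 = γ ^ 2 * (‖g x‖ ^ 2 + 2 * ⟪g x, δ t⟫ + ‖δ t‖ ^ 2) := by
      rw [hy, norm_neg, norm_smul, Real.norm_eq_abs, mul_pow, sq_abs,
        norm_add_sq_real]
    have hs := hsmooth x y
    rw [hipv, hnsq] at hs
    have hab := abs_le.mp hs
    have hipb := abs_le.mp (hip t h1 h2)
    have hδb := hδ t h1 h2
    have hgd : (0:ℝ) ≤ γ * (1 - ρ * γ) := by nlinarith
    nlinarith [hab.2,
      mul_nonneg hgd (by linarith [hipb.1] : (0:ℝ) ≤ ⟪g x, δ t⟫ + C * ε),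
      mul_nonneg (by positivity : (0:ℝ) ≤ ρ / 2 * γ ^ 2) (by linarith : (0:ℝ) ≤ C - ‖δ t‖ ^ 2)]
  -- sum over steps
  have hsum : (γ - ρ / 2 * γ ^ 2) * ∑ t ∈ Finset.Icc 1 T, ‖g (W t)‖ ^ 2 ≤
      ∑ t ∈ Finset.Icc 1 T,
        (f (W t) - f (W (t + 1)) + C * ε * (γ - ρ * γ ^ 2) + ρ / 2 * C * γ ^ 2) := by
    rw [Finset.mul_sum]
    refine Finset.sum_le_sum fun t ht => ?_
    rw [Finset.mem_Icc] at ht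
    exact hstep t ht.1 ht.2
  have htelgen : ∀ n, 1 ≤ n →
      ∑ t ∈ Finset.Icc 1 n, (f (W t) - f (W (t + 1))) = f (W 1) - f (W (n + 1)) := by
    intro n hn
    induction n with
    | zero => omega
    | succ m ih =>
      by_cases hm : 1 ≤ m
      · rw [Finset.sum_Icc_succ_top (by omega : 1 ≤ m + 1), ih hm]; ring
      · have : m = 0 := by omega
        subst this; simp
  have htel := htelgen T hT
  have hcard : (Finset.Icc 1 T).card = T := by
    simp [Nat.card_Icc]
  rw [Finset.sum_add_distrib, Finset.sum_add_distrib, htel, Finset.sum_const,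
    Finset.sum_const, hcard] at hsum
  have hfs := hfstar (W (T + 1))
  have : (T : ℝ) ≥ 0 := Nat.cast_nonneg T
  calc (γ - ρ / 2 * γ ^ 2) * ∑ t ∈ Finset.Icc 1 T, ‖g (W t)‖ ^ 2
      ≤ f (W 1) - f (W (T + 1)) + T • (C * ε * (γ - ρ * γ ^ 2)) + T • (ρ / 2 * C * γ ^ 2) := hsum
    _ ≤ f (W 1) - fstar + C * T * (γ - ρ * γ ^ 2) * ε + ρ / 2 * C * T * γ ^ 2 := by
        simp only [nsmul_eq_mul]
        nlinarith
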